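/- arXiv:2009.13054 — 2 statements merged into one kernel-verified Lean document; each statement's English description precedes it below -/
import Mathlib

section
/- Let h be a finite-dimensional nilpotent Lie algebra over ℂ and D a nonzero semisimple (diagonalizable) derivation of h. Then the semidirect product g = ℂX ⋉_D h, with bracket [X, z] = D(z) for z ∈ h and the given bracket on h, is solvable but not nilpotent. -/
/-- Derived series of subspaces of a bilinear multiplication. -/
def derivedSeriesOfBil {V : Type*} [AddCommGroup V] [Module ℂ V]
    (b : V →ₗ[ℂ] V →ₗ[ℂ] V) : ℕ → Submodule ℂ V
  | 0 => ⊤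
  | (k + 1) => Submodule.span ℂ
      {w | ∃ x ∈ derivedSeriesOfBil b k, ∃ y ∈ derivedSeriesOfBil b k, w = b x y}

/-- Lower central series of subspaces of a bilinear multiplication. -/
def lowerCentralOfBil {V : Type*} [AddCommGroup V] [Module ℂ V]
    (b : V →ₗ[ℂ] V →ₗ[ℂ] V) : ℕ → Submodule ℂ V
  | 0 => ⊤
  | (k + 1) => Submodule.span ℂ
      {w | ∃ x : V, ∃ y ∈ lowerCentralOfBil b k, w = b x y}

/-- if `h` is a finite-dimensional nilpotent complex Lie algebra and `D` a nonzero
semisimple (diagonalizable) derivation of `h`, then the semidirect product `ℂX ⋉_D h`, with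
bracket `[(a,y),(b,z)] = (0, a•D z - b•D y + [y,z])`, is solvable but not nilpotent. -/
theorem semidirect_solvable_not_nilpotent {h : Type*} [LieRing h] [LieAlgebra ℂ h]
    [FiniteDimensional ℂ h] [LieRing.IsNilpotent h]
    (D : h →ₗ[ℂ] h) (hD : D ≠ 0)
    (hDder : ∀ y z : h, D ⁅y, z⁆ = ⁅D y, z⁆ + ⁅y, D z⁆)
    (hDss : ∃ (ι : Type) (e : Module.Basis ι ℂ h) (c : ι → ℂ), ∀ i, D (e i) = c i • e i)
    (b : (ℂ × h) →ₗ[ℂ] (ℂ × h) →ₗ[ℂ] (ℂ × h))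
    (hb : ∀ (a : ℂ) (y : h) (a' : ℂ) (z : h),
      b (a, y) (a', z) = ((0 : ℂ), a • D z - a' • D y + ⁅y, z⁆)) :
    (∃ k : ℕ, derivedSeriesOfBil b k = ⊥) ∧ (∀ k : ℕ, lowerCentralOfBil b k ≠ ⊥) := by
  constructor
  · -- solvability
    have key : ∀ k : ℕ, derivedSeriesOfBil b (k + 1) ≤
        (LieAlgebra.derivedSeries ℂ h k : LieIdeal ℂ h).toSubmodule.map
          (LinearMap.inr ℂ ℂ h) := by
      intro k
      induction k with
      | zero =>
        rw [derivedSeriesOfBil, Submodule.span_le]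
        rintro w ⟨x, -, y, -, rfl⟩
        exact ⟨(b x y).2, trivial, by
          have := hb x.1 x.2 y.1 y.2
          simp only [Prod.mk.eta] at this
          rw [this]; rfl⟩
      | succ k ih =>
        rw [derivedSeriesOfBil, Submodule.span_le]
        rintro w ⟨x, hx, y, hy, rfl⟩
        have hx' := ih (by
          have : derivedSeriesOfBil b (k+1) ≤ derivedSeriesOfBil b (k+1+1) ⊔ derivedSeriesOfBil b (k+1) := le_sup_right
          exact hx)
        have hy' := ih hy
        obtain ⟨v, hv, hvx⟩ := hx'
        obtain ⟨u, hu, huy⟩ := hy'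
        have hxv : x = ((0 : ℂ), v) := by
          rw [← hvx]; rfl
        have hyu : y = ((0 : ℂ), u) := by rw [← huy]; rfl
        subst hxv hyu
        refine ⟨⁅v, u⁆, ?_, ?_⟩
        · have := LieSubmodule.lie_mem_lie hv hu
          rw [← LieAlgebra.derivedSeriesOfIdeal_succ] at this
          exact this
        · rw [hb 0 v 0 u]
          simp
    obtain ⟨N, hN⟩ := LieAlgebra.IsSolvable.solvable ℂ h
    refine ⟨N + 1, le_bot_iff.mp ?_⟩
    refine le_trans (key N) ?_
    rw [hN]
    simp
  · -- not nilpotent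
    obtain ⟨ι, e, c, hc⟩ := hDss
    have : ∃ i, c i ≠ 0 := by
      by_contra hcon
      push_neg at hcon
      apply hD
      apply e.ext
      intro i
      rw [hc i, hcon i]
      simp
    obtain ⟨i, hi⟩ := this
    have hmem : ∀ k, ((0 : ℂ), e i) ∈ lowerCentralOfBil b k := by
      intro k
      induction k with
      | zero => trivial
      | succ k ih =>
        have h1 : ((0 : ℂ), c i • e i) ∈ lowerCentralOfBil b (k + 1) := by
          rw [lowerCentralOfBil]
          apply Submodule.subset_span
          exact ⟨((1 : ℂ), 0), ((0 : ℂ), e i), ih, by rw [hb 1 0 0 (e i)]; simp [hc i]⟩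
        have h2 := (lowerCentralOfBil b (k+1)).smul_mem (c i)⁻¹ h1
        simpa [smul_smul, inv_mul_cancel₀ hi] using h2
    intro k hk
    have := hmem k
    rw [hk] at this
    simp only [Submodule.mem_bot, Prod.mk_eq_zero] at this
    exact e.ne_zero i this.2
end

section
/- Let t ∈ ℂ∖{0} and let d₁,…,d_m ∈ ℂ be pairwise distinct. Suppose (p_{r,s})_{1 ≤ s ≤ r ≤ m} is a family of complex numbers with prescribed diagonal values p_{s,s} and coefficients d_{r,s} ∈ ℂ for r > s, satisfying the recurrence p_{r,s} = Σ_{l=s}^{r} ( p_{r,l}·f_r(l,s)·Y(r,s) + p_{l,s}·f_s(r,l)·Y(s,r) ) for all r > s, where Y(i,j) = 1/(t(d_i − d_j)) and f_z(x,y) = t·d_{x,y} if x − y > 1, f_z(x,y) = t(1 + d_{x,y}) if z ≤ y = x−1, and f_z(x,y) = 1 + t·d_{x,y} if z > y = x−1. Then p_{r,s} is uniquely determined by the diagonal values, and p_{r,s} = Σ over all strictly decreasing integer sequences a₁ = r > a₂ > ⋯ > a_k = s (of every length k ≥ 2) of Σ_{i=1}^{k} p_{a_i,a_i} · Π_{j=1}^{k−1}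 f_{a_i}(a_j, a_{j+1}) · Y_k(a_i, a_j), where Y_k(a_i, a_j) = Y(a_i, a_j) if i ≠ j and Y_k(a_i, a_i) = Y(a_i, a_k). -/
noncomputable section

/-- `Y(i,j) = 1/(t(d_i − d_j))`. -/
def Yc (t : ℂ) (d : ℕ → ℂ) (i j : ℕ) : ℂ := 1 / (t * (d i - d j))

/-- `f_z(x,y)` for `x > y`: `t·d_{x,y}` if `x − y > 1`; `t(1 + d_{x,y})` if `z ≤ y = x−1`;
`1 + t·d_{x,y}` if `z > y = x−1` (and `0` if `x ≤ y`). -/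
def fz (t : ℂ) (doff : ℕ → ℕ → ℂ) (z x y : ℕ) : ℂ :=
  if x ≤ y then 0
  else if y + 1 < x then t * doff x y
  else if z ≤ y then t * (1 + doff x y)
  else 1 + t * doff x y

/-- The strictly decreasing sequence `r = a₁ > a₂ > ⋯ > a_k = s` whose intermediate entries are
the elements of `S ⊆ (s, r)`, as a list sorted in decreasing order. -/
def seqList (r s : ℕ) (S : Finset ℕ) : List ℕ :=
  ((insert r (insert s S)).sort (· ≤ ·)).reverse

/-- The contribution `Σ_{i=1}^{k} p_{a_i,a_i} · Π_{j=1}^{k−1} f_{a_i}(a_j, a_{j+1}) · Y_k(a_i, a_j)`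
of a strictly decreasing sequence `a₁ > ⋯ > a_k`, where `Y_k(a_i,a_j) = Y(a_i,a_j)` for `i ≠ j`
and `Y_k(a_i,a_i) = Y(a_i,a_k)`. -/
def seqTerm (t : ℂ) (d : ℕ → ℂ) (doff : ℕ → ℕ → ℂ) (pdiag : ℕ → ℂ) (L : List ℕ) : ℂ :=
  ∑ i ∈ Finset.range L.length,
    pdiag (L.getD i 0) *
      ∏ j ∈ Finset.range (L.length - 1),
        fz t doff (L.getD i 0) (L.getD j 0) (L.getD (j + 1) 0) *
          (if i ≠ j then Yc t d (L.getD i 0) (L.getD j 0)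
            else Yc t d (L.getD i 0) (L.getD (L.length - 1) 0))

lemma Ykey (t : ℂ) (d : ℕ → ℂ) (ht : t ≠ 0) {u r s : ℕ}
    (hur : d u ≠ d r) (hus : d u ≠ d s) (hrs : d r ≠ d s) :
    Yc t d u r * Yc t d u s = Yc t d u r * Yc t d r s + Yc t d u s * Yc t d s r := by
  have h1 : d u - d r ≠ 0 := sub_ne_zero.2 hur
  have h2 : d u - d s ≠ 0 := sub_ne_zero.2 hus
  have h3 : d r - d s ≠ 0 := sub_ne_zero.2 hrs
  have h4 : d s - d r ≠ 0 := sub_ne_zero.2 (Ne.symm hrs)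
  unfold Yc; field_simp; ring

lemma fz_congr (t : ℂ) (doff : ℕ → ℕ → ℂ) {z₁ z₂ x y : ℕ} (h : z₁ ≤ y ↔ z₂ ≤ y) :
    fz t doff z₁ x y = fz t doff z₂ x y := by
  unfold fz; split_ifs <;> tauto

lemma fz_zero (t : ℂ) (doff : ℕ → ℕ → ℂ) {z x y : ℕ} (h : x ≤ y) : fz t doff z x y = 0 := by
  simp [fz, h]

def trm (t : ℂ) (d : ℕ → ℂ) (doff : ℕ → ℕ → ℂ) (pdiag : ℕ → ℂ) (g : ℕ → ℕ) (k : ℕ) : ℂ :=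
  ∑ i ∈ Finset.range k, pdiag (g i) *
    ∏ j ∈ Finset.range (k - 1),
      fz t doff (g i) (g j) (g (j + 1)) *
        (if i ≠ j then Yc t d (g i) (g j) else Yc t d (g i) (g (k - 1)))

lemma extract1 (f : ℕ → ℂ) {s : Finset ℕ} {a : ℕ} (h : a ∈ s) :
    ∏ j ∈ s, f j = f a * ∏ j ∈ s.erase a, f j := (Finset.mul_prod_erase s f h).symm

lemma sum_assemble (N : ℕ) (A T1 T2 : ℕ → ℂ)
    (h0 : A 0 = T1 0) (hn : A (N + 1 + 1) = T2 (N + 1))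
    (hi : ∀ i, 1 ≤ i → i ≤ N + 1 → A i = T1 i + T2 (i - 1)) :
    ∑ i ∈ Finset.range (N + 1 + 1 + 1), A i
      = ∑ i ∈ Finset.range (N + 1 + 1), T1 i + ∑ i ∈ Finset.range (N + 1 + 1), T2 i := by
  rw [Finset.sum_range_succ' A (N + 1 + 1)]
  rw [Finset.sum_range_succ (fun i => A (i + 1)) (N + 1)]
  rw [Finset.sum_range_succ' T1 (N + 1)]
  rw [Finset.sum_range_succ T2 (N + 1)]
  have hcong : ∑ i ∈ Finset.range (N + 1), A (i + 1)
      = ∑ i ∈ Finset.range (N + 1), (T1 (i + 1) + T2 i) := by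
    refine Finset.sum_congr rfl fun i hic => ?_
    have hi' := hi (i + 1) (by omega) (by simp at hic; omega)
    simpa using hi'
  rw [hcong, Finset.sum_add_distrib, h0, hn]
  ring

lemma star_term (m : ℕ) (t : ℂ) (ht : t ≠ 0) (d : ℕ → ℂ)
    (hd : ∀ i j, 1 ≤ i → i ≤ m → 1 ≤ j → j ≤ m → i ≠ j → d i ≠ d j)
    (doff : ℕ → ℕ → ℂ) (pdiag : ℕ → ℂ)
    (g : ℕ → ℕ) (n : ℕ) (hn : 2 ≤ n)
    (hmono : ∀ i j, i < j → j ≤ n → g j < g i)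
    (hg1 : 1 ≤ g n) (hgm : g 0 ≤ m) :
    trm t d doff pdiag g (n + 1)
      = trm t d doff pdiag g n *
          (fz t doff (g 0) (g (n - 1)) (g n) * Yc t d (g 0) (g n))
        + trm t d doff pdiag (fun i => g (i + 1)) n *
          (fz t doff (g n) (g 0) (g 1) * Yc t d (g n) (g 0)) := by
  classical
  obtain ⟨N, rfl⟩ : ∃ N, n = N + 2 := ⟨n - 2, by omega⟩
  have hle : ∀ i j, i ≤ j → j ≤ N + 2 → g j ≤ g i := by
    intro i j hij hj
    rcases eq_or_lt_of_le hij with h | h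
    · subst h; exact le_rfl
    · exact le_of_lt (hmono i j h hj)
  have hb1 : ∀ i, i ≤ N + 2 → 1 ≤ g i := fun i hi => le_trans hg1 (hle i (N + 2) hi le_rfl)
  have hbm : ∀ i, i ≤ N + 2 → g i ≤ m := fun i hi => le_trans (hle 0 i (Nat.zero_le i) hi) hgm
  have hdne : ∀ i j, i ≤ N + 2 → j ≤ N + 2 → i < j → d (g i) ≠ d (g j) := by
    intro i j hi hj hij
    exact hd _ _ (hb1 i hi) (hbm i hi) (hb1 j hj) (hbm j hj)
      (Nat.ne_of_gt (hmono i j hij hj))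
  rw [show N + 2 - 1 = N + 1 by omega]
  set w : ℕ → ℕ → ℂ := fun i j =>
    fz t doff (g i) (g j) (g (j + 1)) *
      (if i ≠ j then Yc t d (g i) (g j) else Yc t d (g i) (g (N + 2))) with hw
  set v : ℕ → ℕ → ℂ := fun i j =>
    fz t doff (g i) (g j) (g (j + 1)) *
      (if i ≠ j then Yc t d (g i) (g j) else Yc t d (g i) (g (N + 1))) with hv
  have hLHS : trm t d doff pdiag g (N + 2 + 1)
      = ∑ i ∈ Finset.range (N + 2 + 1), pdiag (g i) * ∏ j ∈ Finset.range (N + 2), w i j := by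
    simp only [trm, hw, Nat.add_sub_cancel]
  have hD : trm t d doff pdiag g (N + 2)
      = ∑ i ∈ Finset.range (N + 2), pdiag (g i) * ∏ j ∈ Finset.range (N + 1), v i j := by
    simp only [trm, hv]
    rw [show N + 2 - 1 = N + 1 by omega]
  have hTl : trm t d doff pdiag (fun i => g (i + 1)) (N + 2)
      = ∑ i ∈ Finset.range (N + 2),
          pdiag (g (i + 1)) * ∏ j ∈ Finset.range (N + 1), w (i + 1) (j + 1) := by
    simp only [trm, hw]
    rw [show N + 2 - 1 = N + 1 by omega]
    refine Finset.sum_congr rfl fun i _ => ?_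
    refine congrArg _ (Finset.prod_congr rfl fun j _ => ?_)
    have e : N + 1 + 1 = N + 2 := by omega
    rw [e]
    by_cases h : i = j
    · subst h; simp
    · rw [if_pos h, if_pos (show i + 1 ≠ j + 1 by omega)]
  have hshift : ∀ i : ℕ, ∏ j ∈ Finset.Ico 1 (N + 2), w i j
      = ∏ j ∈ Finset.range (N + 1), w i (j + 1) := by
    intro i
    rw [Finset.prod_Ico_eq_prod_range, show N + 2 - 1 = N + 1 by omega]
    exact Finset.prod_congr rfl fun j _ => by rw [Nat.add_comm 1 j]
  rw [hLHS, hD, hTl, Finset.sum_mul, Finset.sum_mul]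
  refine sum_assemble N _ _ _ ?_ ?_ ?_
  · -- i = 0
    rw [extract1 (w 0) (show (0:ℕ) ∈ Finset.range (N + 2) by
          simp only [Finset.mem_range]; omega),
        extract1 (w 0) (show N + 1 ∈ (Finset.range (N + 2)).erase 0 by
          simp only [Finset.mem_erase, Finset.mem_range]; omega),
        extract1 (v 0) (show (0:ℕ) ∈ Finset.range (N + 1) by
          simp only [Finset.mem_range]; omega)]
    have hset : (Finset.range (N + 1)).erase 0 = ((Finset.range (N + 2)).erase 0).erase (N + 1) := by
      ext x; simp only [Finset.mem_erase, Finset.mem_range]; omega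
    have hcong : ∏ j ∈ (Finset.range (N + 1)).erase 0, v 0 j
        = ∏ j ∈ ((Finset.range (N + 2)).erase 0).erase (N + 1), w 0 j := by
      rw [hset]
      refine Finset.prod_congr rfl fun j hj => ?_
      have hj0 : (0:ℕ) ≠ j := by simp only [Finset.mem_erase, Finset.mem_range] at hj; omega
      simp only [hv, hw, if_pos hj0]
    rw [hcong]
    set P := ∏ j ∈ ((Finset.range (N + 2)).erase 0).erase (N + 1), w 0 j with hP
    simp only [hw, hv]
    simp only [ne_eq, not_true_eq_false, if_false, ite_false, if_neg (show ¬ ((0:ℕ) ≠ 0) by simp),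
      if_pos (show (0:ℕ) ≠ N + 1 by omega)]
    ring
  · -- i = N + 2  (last)
    rw [show N + 1 + 1 = N + 2 by omega]
    rw [extract1 (w (N + 2)) (show (0:ℕ) ∈ Finset.range (N + 2) by
          simp only [Finset.mem_range]; omega)]
    rw [show (Finset.range (N + 2)).erase 0 = Finset.Ico 1 (N + 2) by
          ext x; simp only [Finset.mem_erase, Finset.mem_range, Finset.mem_Ico]; omega]
    rw [hshift (N + 2)]
    set P := ∏ j ∈ Finset.range (N + 1), w (N + 2) (j + 1) with hP
    simp only [hw]
    rw [if_pos (show N + 2 ≠ 0 by omega)]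
    ring
  · -- interior
    intro i hi1 hi2
    rw [show i - 1 + 1 = i by omega]
    have hC1 : fz t doff (g 0) (g (N + 1)) (g (N + 2)) = fz t doff (g i) (g (N + 1)) (g (N + 2)) :=
      fz_congr _ _ (iff_of_false (not_le.2 (hmono 0 (N + 2) (by omega) le_rfl))
        (not_le.2 (hmono i (N + 2) (by omega) le_rfl)))
    have hC2 : fz t doff (g (N + 2)) (g 0) (g 1) = fz t doff (g i) (g 0) (g 1) :=
      fz_congr _ _ (iff_of_true (le_of_lt (hmono 1 (N + 2) (by omega) le_rfl))
        (hle 1 i hi1 (by omega)))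
    rw [hC1, hC2, ← hshift i]
    have key := Ykey t d ht (u := g i) (r := g 0) (s := g (N + 2))
      ((hdne 0 i (by omega) (by omega) (by omega)).symm)
      (hdne i (N + 2) (by omega) le_rfl (by omega))
      (hdne 0 (N + 2) (by omega) le_rfl (by omega))
    rcases eq_or_lt_of_le hi2 with hiN | hiN
    · -- i = N + 1
      subst hiN
      rw [extract1 (w (N + 1)) (show N + 1 ∈ Finset.Ico 1 (N + 2) by
            simp only [Finset.mem_Ico]; omega)]
      rw [extract1 (w (N + 1)) (show (0:ℕ) ∈ Finset.range (N + 2) by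
            simp only [Finset.mem_range]; omega),
          extract1 (w (N + 1)) (show N + 1 ∈ (Finset.range (N + 2)).erase 0 by
            simp only [Finset.mem_erase, Finset.mem_range]; omega),
          extract1 (v (N + 1)) (show (0:ℕ) ∈ Finset.range (N + 1) by
            simp only [Finset.mem_range]; omega)]
      have hs1 : (Finset.range (N + 1)).erase 0
          = ((Finset.range (N + 2)).erase 0).erase (N + 1) := by
        ext x; simp only [Finset.mem_erase, Finset.mem_range]; omega
      have hs2 : (Finset.Ico 1 (N + 2)).erase (N + 1)
          = ((Finset.range (N + 2)).erase 0).erase (N + 1) := by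
        ext x; simp only [Finset.mem_erase, Finset.mem_range, Finset.mem_Ico]; omega
      rw [hs1, hs2]
      have hvw : ∏ j ∈ ((Finset.range (N + 2)).erase 0).erase (N + 1), v (N + 1) j
          = ∏ j ∈ ((Finset.range (N + 2)).erase 0).erase (N + 1), w (N + 1) j := by
        refine Finset.prod_congr rfl fun j hj => ?_
        have hij : N + 1 ≠ j := by simp only [Finset.mem_erase, Finset.mem_range] at hj; omega
        simp only [hv, hw, if_pos hij]
      rw [hvw]
      set P := ∏ j ∈ ((Finset.range (N + 2)).erase 0).erase (N + 1), w (N + 1) j with hP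
      simp only [hw, hv]
      simp only [ne_eq, not_true_eq_false, if_false, ite_false,
        if_neg (show ¬ (N + 1 ≠ N + 1) by simp), if_pos (show N + 1 ≠ 0 by omega)]
      linear_combination (pdiag (g (N + 1)) * fz t doff (g (N + 1)) (g 0) (g 1)
        * fz t doff (g (N + 1)) (g (N + 1)) (g (N + 2)) * P) * key
    · -- 1 ≤ i ≤ N
      rw [extract1 (w i) (show i ∈ Finset.Ico 1 (N + 2) by
            simp only [Finset.mem_Ico]; omega),
          extract1 (w i) (show N + 1 ∈ (Finset.Ico 1 (N + 2)).erase i by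
            simp only [Finset.mem_erase, Finset.mem_Ico]; omega)]
      rw [extract1 (w i) (show (0:ℕ) ∈ Finset.range (N + 2) by
            simp only [Finset.mem_range]; omega),
          extract1 (w i) (show i ∈ (Finset.range (N + 2)).erase 0 by
            simp only [Finset.mem_erase, Finset.mem_range]; omega),
          extract1 (w i) (show N + 1 ∈ ((Finset.range (N + 2)).erase 0).erase i by
            simp only [Finset.mem_erase, Finset.mem_range]; omega),
          extract1 (v i) (show (0:ℕ) ∈ Finset.range (N + 1) by
            simp only [Finset.mem_range]; omega),
          extract1 (v i) (show i ∈ (Finset.range (N + 1)).erase 0 by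
            simp only [Finset.mem_erase, Finset.mem_range]; omega)]
      have hs1 : ((Finset.range (N + 1)).erase 0).erase i
          = (((Finset.range (N + 2)).erase 0).erase i).erase (N + 1) := by
        ext x; simp only [Finset.mem_erase, Finset.mem_range]; omega
      have hs2 : ((Finset.Ico 1 (N + 2)).erase i).erase (N + 1)
          = (((Finset.range (N + 2)).erase 0).erase i).erase (N + 1) := by
        ext x; simp only [Finset.mem_erase, Finset.mem_range, Finset.mem_Ico]; omega
      rw [hs1, hs2]
      have hvw : ∏ j ∈ (((Finset.range (N + 2)).erase 0).erase i).erase (N + 1), v i j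
          = ∏ j ∈ (((Finset.range (N + 2)).erase 0).erase i).erase (N + 1), w i j := by
        refine Finset.prod_congr rfl fun j hj => ?_
        have hij : i ≠ j := by simp only [Finset.mem_erase, Finset.mem_range] at hj; omega
        simp only [hv, hw, if_pos hij]
      rw [hvw]
      set P := ∏ j ∈ (((Finset.range (N + 2)).erase 0).erase i).erase (N + 1), w i j with hP
      simp only [hw, hv]
      simp only [ne_eq, not_true_eq_false, if_false, ite_false,
        if_neg (show ¬ (i ≠ i) by simp), if_pos (show i ≠ 0 by omega),
        if_pos (show i ≠ N + 1 by omega)]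
      linear_combination (pdiag (g i) * fz t doff (g i) (g 0) (g 1)
        * fz t doff (g i) (g i) (g (i + 1))
        * fz t doff (g i) (g (N + 1)) (g (N + 2)) * Yc t d (g i) (g (N + 1)) * P) * key

-- ===================== seqList layer =====================

lemma seqTerm_eq_trm (t : ℂ) (d : ℕ → ℂ) (doff : ℕ → ℕ → ℂ) (pdiag : ℕ → ℂ) (L : List ℕ) :
    seqTerm t d doff pdiag L = trm t d doff pdiag (fun i => L.getD i 0) L.length := rfl

lemma trm_congr (t : ℂ) (d : ℕ → ℂ) (doff : ℕ → ℕ → ℂ) (pdiag : ℕ → ℂ)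
    (g g' : ℕ → ℕ) (k : ℕ) (h : ∀ i, i < k → g i = g' i) :
    trm t d doff pdiag g k = trm t d doff pdiag g' k := by
  unfold trm
  refine Finset.sum_congr rfl fun i hi => ?_
  simp only [Finset.mem_range] at hi
  rw [h i hi]
  refine congrArg _ (Finset.prod_congr rfl fun j hj => ?_)
  simp only [Finset.mem_range] at hj
  rw [h j (by omega), h (j + 1) (by omega), h (k - 1) (by omega)]

lemma seqList_sorted (r s : ℕ) (S : Finset ℕ) : (seqList r s S).Pairwise (· > ·) := by
  unfold seqList
  rw [List.pairwise_reverse]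
  exact List.sortedLT_iff_pairwise.mp (Finset.sortedLT_sort (insert r (insert s S)))

lemma seqList_mem (r s : ℕ) (S : Finset ℕ) (x : ℕ) :
    x ∈ seqList r s S ↔ x = r ∨ x = s ∨ x ∈ S := by
  unfold seqList
  simp [Finset.mem_sort]

lemma seqList_nodup (r s : ℕ) (S : Finset ℕ) : (seqList r s S).Nodup := by
  unfold seqList
  rw [List.nodup_reverse]
  exact (insert r (insert s S)).sort_nodup _

lemma eq_seqList (r s : ℕ) (S : Finset ℕ) (L : List ℕ) (hL : L.Pairwise (· > ·))
    (hmem : ∀ x, x ∈ L ↔ x = r ∨ x = s ∨ x ∈ S) : L = seqList r s S := by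
  haveI : Std.Antisymm (· > · : ℕ → ℕ → Prop) := ⟨fun a b h1 h2 => absurd h2 (lt_asymm h1)⟩
  refine List.Perm.eq_of_pairwise' hL (seqList_sorted r s S) ?_
  refine List.perm_of_nodup_nodup_toFinset_eq hL.nodup (seqList_nodup r s S) ?_
  ext x
  simp only [List.mem_toFinset, hmem, seqList_mem]

lemma seqList_empty (r s : ℕ) (hsr : s < r) : seqList r s ∅ = [r, s] := by
  refine (eq_seqList r s ∅ [r, s] ?_ ?_).symm
  · simp [List.pairwise_cons, hsr]
  · intro x; simp

lemma seqList_length (r s : ℕ) (S : Finset ℕ) (hsr : s < r) (hS : S ⊆ Finset.Ioo s r) :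
    (seqList r s S).length = S.card + 2 := by
  unfold seqList
  rw [List.length_reverse, Finset.length_sort]
  have hrS : r ∉ insert s S := by
    simp only [Finset.mem_insert]
    push_neg
    refine ⟨by omega, fun hr => ?_⟩
    have := hS hr; simp [Finset.mem_Ioo] at this
  have hsS : s ∉ S := by
    intro hs'; have := hS hs'; simp [Finset.mem_Ioo] at this
  rw [Finset.card_insert_of_notMem hrS, Finset.card_insert_of_notMem hsS]

lemma seqList_cons (r s : ℕ) (S : Finset ℕ) (hsr : s < r) (hS : S ⊆ Finset.Ioo s r)
    (hne : S.Nonempty) :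
    seqList r s S = r :: seqList (S.max' hne) s (S.erase (S.max' hne)) := by
  set M := S.max' hne with hM
  have hMS : M ∈ S := S.max'_mem hne
  have hMIoo := hS hMS
  simp only [Finset.mem_Ioo] at hMIoo
  refine (eq_seqList r s S _ ?_ ?_).symm
  · rw [List.pairwise_cons]
    constructor
    · intro b hb
      rw [seqList_mem] at hb
      rcases hb with rfl | rfl | hb
      · omega
      · omega
      · have hbS : b ∈ S := Finset.mem_of_mem_erase hb
        have := hS hbS; simp [Finset.mem_Ioo] at this; omega
    · exact seqList_sorted _ _ _
  · intro x
    simp only [List.mem_cons, seqList_mem, Finset.mem_erase]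
    constructor
    · rintro (rfl | rfl | rfl | ⟨hxM, hxS⟩) <;> tauto
    · rintro (rfl | rfl | hxS)
      · tauto
      · tauto
      · by_cases hxM : x = M <;> tauto

lemma seqList_append (r s : ℕ) (S : Finset ℕ) (hsr : s < r) (hS : S ⊆ Finset.Ioo s r)
    (hne : S.Nonempty) :
    seqList r s S = seqList r (S.min' hne) (S.erase (S.min' hne)) ++ [s] := by
  set M := S.min' hne with hM
  have hMS : M ∈ S := S.min'_mem hne
  have hMIoo := hS hMS
  simp only [Finset.mem_Ioo] at hMIoo
  refine (eq_seqList r s S _ ?_ ?_).symm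
  · rw [List.pairwise_append]
    refine ⟨seqList_sorted _ _ _, by simp, ?_⟩
    intro a ha b hb
    simp only [List.mem_singleton] at hb
    subst hb
    rw [seqList_mem] at ha
    rcases ha with rfl | rfl | ha
    · omega
    · omega
    · have haS : a ∈ S := Finset.mem_of_mem_erase ha
      have := hS haS; simp [Finset.mem_Ioo] at this; omega
  · intro x
    simp only [List.mem_append, List.mem_singleton, seqList_mem, Finset.mem_erase]
    constructor
    · rintro ((rfl | rfl | ⟨hxM, hxS⟩) | rfl) <;> tauto
    · rintro (rfl | rfl | hxS)
      · tauto
      · tauto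
      · by_cases hxM : x = M <;> tauto

lemma seqList_head (r s : ℕ) (S : Finset ℕ) (hsr : s < r) (hS : S ⊆ Finset.Ioo s r) :
    (seqList r s S).getD 0 0 = r := by
  rcases S.eq_empty_or_nonempty with rfl | hne
  · rw [seqList_empty r s hsr]; rfl
  · rw [seqList_cons r s S hsr hS hne]; rfl

lemma seqList_last (r s : ℕ) (S : Finset ℕ) (hsr : s < r) (hS : S ⊆ Finset.Ioo s r) :
    (seqList r s S).getD ((seqList r s S).length - 1) 0 = s := by
  rcases S.eq_empty_or_nonempty with rfl | hne
  · rw [seqList_empty r s hsr]; rfl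
  · have hlen := seqList_length r s S hsr hS
    rw [seqList_append r s S hsr hS hne]
    set M := S.min' hne
    have hMS : M ∈ S := S.min'_mem hne
    have hMIoo := hS hMS
    simp only [Finset.mem_Ioo] at hMIoo
    have hlen2 : (seqList r M (S.erase M)).length = S.card + 1 := by
      rw [seqList_length r M (S.erase M) (by omega)
        (fun x hx => by
          have hxS := Finset.mem_of_mem_erase hx
          have h2 := hS hxS
          simp only [Finset.mem_erase] at hx
          simp only [Finset.mem_Ioo] at h2 ⊢
          have := S.min'_le x hxS
          omega),
        Finset.card_erase_of_mem hMS]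
      have : 1 ≤ S.card := Finset.card_pos.mpr hne
      omega
    rw [List.length_append, hlen2]
    simp only [List.length_singleton]
    rw [show S.card + 1 + 1 - 1 = S.card + 1 by omega]
    rw [List.getD_append_right _ _ _ _ (by omega)]
    rw [hlen2]
    simp


lemma seqTerm_pair (t : ℂ) (d : ℕ → ℂ) (doff : ℕ → ℕ → ℂ) (pdiag : ℕ → ℂ) (r s : ℕ) :
    seqTerm t d doff pdiag [r, s]
      = pdiag r * (fz t doff r r s * Yc t d r s) + pdiag s * (fz t doff s r s * Yc t d s r) := by
  simp [seqTerm, Finset.sum_range_succ, Finset.prod_range_one]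

lemma star_set (m : ℕ) (t : ℂ) (ht : t ≠ 0) (d : ℕ → ℂ)
    (hd : ∀ i j, 1 ≤ i → i ≤ m → 1 ≤ j → j ≤ m → i ≠ j → d i ≠ d j)
    (doff : ℕ → ℕ → ℂ) (pdiag : ℕ → ℂ) (r s : ℕ) (S : Finset ℕ)
    (h1 : 1 ≤ s) (hm : r ≤ m) (hsr : s < r) (hS : S ⊆ Finset.Ioo s r) (hne : S.Nonempty) :
    seqTerm t d doff pdiag (seqList r s S)
      = seqTerm t d doff pdiag (seqList r (S.min' hne) (S.erase (S.min' hne))) *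
          (fz t doff r (S.min' hne) s * Yc t d r s)
        + seqTerm t d doff pdiag (seqList (S.max' hne) s (S.erase (S.max' hne))) *
          (fz t doff s r (S.max' hne) * Yc t d s r) := by
  have hcard : 1 ≤ S.card := Finset.card_pos.2 hne
  set mn := S.min' hne with hmn
  set mx := S.max' hne with hmx
  have hmnS : mn ∈ S := S.min'_mem hne
  have hmxS : mx ∈ S := S.max'_mem hne
  have hmnIoo := hS hmnS
  have hmxIoo := hS hmxS
  simp only [Finset.mem_Ioo] at hmnIoo hmxIoo
  have hSmn : S.erase mn ⊆ Finset.Ioo mn r := by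
    intro x hx
    have hxS := Finset.mem_of_mem_erase hx
    have h2 := hS hxS
    simp only [Finset.mem_erase] at hx
    simp only [Finset.mem_Ioo] at h2 ⊢
    have := S.min'_le x hxS
    omega
  have hSmx : S.erase mx ⊆ Finset.Ioo s mx := by
    intro x hx
    have hxS := Finset.mem_of_mem_erase hx
    have h2 := hS hxS
    simp only [Finset.mem_erase] at hx
    simp only [Finset.mem_Ioo] at h2 ⊢
    have := S.le_max' x hxS
    omega
  set L := seqList r s S with hLdef
  set n := S.card + 1 with hn
  have hlen : L.length = n + 1 := by
    rw [hLdef, seqList_length r s S hsr hS]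
  set M := seqList r mn (S.erase mn) with hMdef
  set M' := seqList mx s (S.erase mx) with hM'def
  have hMlen : M.length = n := by
    rw [hMdef, seqList_length r mn (S.erase mn) (by omega) hSmn,
      Finset.card_erase_of_mem hmnS]
    omega
  have hM'len : M'.length = n := by
    rw [hM'def, seqList_length mx s (S.erase mx) (by omega) hSmx,
      Finset.card_erase_of_mem hmxS]
    omega
  have happ : L = M ++ [s] := seqList_append r s S hsr hS hne
  have hcons : L = r :: M' := seqList_cons r s S hsr hS hne
  have hg0 : L.getD 0 0 = r := seqList_head r s S hsr hS
  have hgn : L.getD n 0 = s := by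
    have := seqList_last r s S hsr hS
    rw [← hLdef] at this
    rwa [hlen, show n + 1 - 1 = n by omega] at this
  have hgn1 : L.getD (n - 1) 0 = mn := by
    rw [happ, List.getD_append _ _ _ _ (by omega)]
    have := seqList_last r mn (S.erase mn) (by omega) hSmn
    rw [← hMdef] at this
    rwa [hMlen, show n - 1 = n - 1 from rfl] at this
  have hg1 : L.getD 1 0 = mx := by
    rw [hcons, List.getD_cons_succ]
    have := seqList_head mx s (S.erase mx) (by omega) hSmx
    rw [← hM'def] at this
    exact this
  have hmono : ∀ i j, i < j → j ≤ n → L.getD j 0 < L.getD i 0 := by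
    intro i j hij hj
    have hi : i < L.length := by omega
    have hj' : j < L.length := by omega
    rw [List.getD_eq_getElem _ _ hi, List.getD_eq_getElem _ _ hj']
    have hp := List.pairwise_iff_get.mp (seqList_sorted r s S)
    exact hp ⟨i, hi⟩ ⟨j, hj'⟩ hij
  have star := star_term m t ht d hd doff pdiag (fun i => L.getD i 0) n (by omega)
    hmono (by show 1 ≤ L.getD n 0; omega) (by show L.getD 0 0 ≤ m; omega)
  simp only [hg0, hgn, hgn1, hg1] at star
  have e1 : seqTerm t d doff pdiag (seqList r s S)
      = trm t d doff pdiag (fun i => L.getD i 0) (n + 1) := by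
    rw [← hLdef, seqTerm_eq_trm, hlen]
  have e2 : trm t d doff pdiag (fun i => L.getD i 0) n = seqTerm t d doff pdiag M := by
    rw [seqTerm_eq_trm, hMlen]
    refine trm_congr _ _ _ _ _ _ _ (fun i hi => ?_)
    rw [happ, List.getD_append _ _ _ _ (by omega)]
  have e3 : trm t d doff pdiag (fun i => L.getD (i + 1) 0) n = seqTerm t d doff pdiag M' := by
    rw [seqTerm_eq_trm, hM'len]
    refine trm_congr _ _ _ _ _ _ _ (fun i hi => ?_)
    rw [hcons, List.getD_cons_succ]
  rw [e1, star, e2, e3]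


def mnF (S : Finset ℕ) : ℕ := S.min.untopD 0
def mxF (S : Finset ℕ) : ℕ := S.max.unbotD 0

lemma mnF_eq {S : Finset ℕ} (hne : S.Nonempty) : mnF S = S.min' hne := by
  unfold mnF
  rw [← Finset.coe_min' hne]
  rfl

lemma mxF_eq {S : Finset ℕ} (hne : S.Nonempty) : mxF S = S.max' hne := by
  unfold mxF
  rw [← Finset.coe_max' hne]
  rfl

lemma mnF_insert {l : ℕ} {S' : Finset ℕ} (h : ∀ x ∈ S', l < x) : mnF (insert l S') = l := by
  rw [mnF_eq (Finset.insert_nonempty _ _)]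
  apply le_antisymm
  · exact Finset.min'_le _ _ (Finset.mem_insert_self _ _)
  · apply Finset.le_min'
    intro y hy
    rcases Finset.mem_insert.mp hy with rfl | hy
    · exact le_rfl
    · exact le_of_lt (h y hy)

lemma mxF_insert {l : ℕ} {S' : Finset ℕ} (h : ∀ x ∈ S', x < l) : mxF (insert l S') = l := by
  rw [mxF_eq (Finset.insert_nonempty _ _)]
  apply le_antisymm
  · apply Finset.max'_le
    intro y hy
    rcases Finset.mem_insert.mp hy with rfl | hy
    · exact le_rfl
    · exact le_of_lt (h y hy)
  · exact Finset.le_max' _ _ (Finset.mem_insert_self _ _)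

lemma sum_powerset_split (a b : ℕ) (F : Finset ℕ → ℂ) :
    ∑ S ∈ (Finset.Ioo a b).powerset, F S
      = F ∅ + ∑ S ∈ (Finset.Ioo a b).powerset.filter (fun S => S.Nonempty), F S := by
  rw [← Finset.sum_filter_add_sum_filter_not ((Finset.Ioo a b).powerset) (fun S => S.Nonempty)]
  rw [add_comm]
  congr 1
  have h : (Finset.Ioo a b).powerset.filter (fun S => ¬ S.Nonempty) = {∅} := by
    ext S
    simp only [Finset.mem_filter, Finset.mem_powerset, Finset.not_nonempty_iff_eq_empty,
      Finset.mem_singleton]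
    constructor
    · rintro ⟨-, h⟩; exact h
    · rintro rfl; exact ⟨Finset.empty_subset _, rfl⟩
  rw [h, Finset.sum_singleton]

lemma sum_powerset_min (a b : ℕ) (F : Finset ℕ → ℂ) :
    ∑ S ∈ (Finset.Ioo a b).powerset.filter (fun S => S.Nonempty), F S
      = ∑ l ∈ Finset.Ioo a b, ∑ S' ∈ (Finset.Ioo l b).powerset, F (insert l S') := by
  rw [Finset.sum_sigma' (Finset.Ioo a b) (fun l => (Finset.Ioo l b).powerset)
    (fun l S' => F (insert l S'))]
  refine Finset.sum_bij' (i := fun S _ => (⟨mnF S, S.erase (mnF S)⟩ : Σ _ : ℕ, Finset ℕ))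
    (j := fun x _ => insert x.1 x.2) ?_ ?_ ?_ ?_ ?_
  · intro S hS
    simp only [Finset.mem_filter, Finset.mem_powerset] at hS
    obtain ⟨hsub, hne⟩ := hS
    rw [mnF_eq hne]
    have hmem := S.min'_mem hne
    have hIoo := hsub hmem
    simp only [Finset.mem_Ioo] at hIoo
    simp only [Finset.mem_sigma, Finset.mem_powerset]
    refine ⟨by simp only [Finset.mem_Ioo]; omega, ?_⟩
    intro x hx
    have hxS := Finset.mem_of_mem_erase hx
    have h2 := hsub hxS
    simp only [Finset.mem_erase] at hx
    simp only [Finset.mem_Ioo] at h2 ⊢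
    have := S.min'_le x hxS
    omega
  · rintro ⟨l, S'⟩ hx
    dsimp only
    simp only [Finset.mem_sigma, Finset.mem_powerset, Finset.mem_Ioo] at hx
    simp only [Finset.mem_filter, Finset.mem_powerset]
    constructor
    · intro x hxmem
      rcases Finset.mem_insert.mp hxmem with rfl | hy
      · simp [Finset.mem_Ioo]; omega
      · have := hx.2 hy; simp only [Finset.mem_Ioo] at this ⊢; omega
    · exact Finset.insert_nonempty _ _
  · intro S hS
    dsimp only
    simp only [Finset.mem_filter, Finset.mem_powerset] at hS
    rw [mnF_eq hS.2]
    exact Finset.insert_erase (S.min'_mem hS.2)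
  · rintro ⟨l, S'⟩ hx
    dsimp only
    simp only [Finset.mem_sigma, Finset.mem_powerset, Finset.mem_Ioo] at hx
    have hfst : mnF (insert l S') = l := by
      apply mnF_insert
      intro x hxm
      have := hx.2 hxm
      simp only [Finset.mem_Ioo] at this
      omega
    have hlS' : l ∉ S' := by
      intro hmem
      have := hx.2 hmem
      simp only [Finset.mem_Ioo] at this
      omega
    simp only [hfst]
    rw [Finset.erase_insert hlS']
  · intro S hS
    dsimp only
    simp only [Finset.mem_filter, Finset.mem_powerset] at hS
    rw [mnF_eq hS.2, Finset.insert_erase (S.min'_mem hS.2)]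

lemma sum_powerset_max (a b : ℕ) (F : Finset ℕ → ℂ) :
    ∑ S ∈ (Finset.Ioo a b).powerset.filter (fun S => S.Nonempty), F S
      = ∑ l ∈ Finset.Ioo a b, ∑ S' ∈ (Finset.Ioo a l).powerset, F (insert l S') := by
  rw [Finset.sum_sigma' (Finset.Ioo a b) (fun l => (Finset.Ioo a l).powerset)
    (fun l S' => F (insert l S'))]
  refine Finset.sum_bij' (i := fun S _ => (⟨mxF S, S.erase (mxF S)⟩ : Σ _ : ℕ, Finset ℕ))
    (j := fun x _ => insert x.1 x.2) ?_ ?_ ?_ ?_ ?_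
  · intro S hS
    simp only [Finset.mem_filter, Finset.mem_powerset] at hS
    obtain ⟨hsub, hne⟩ := hS
    rw [mxF_eq hne]
    have hmem := S.max'_mem hne
    have hIoo := hsub hmem
    simp only [Finset.mem_Ioo] at hIoo
    simp only [Finset.mem_sigma, Finset.mem_powerset]
    refine ⟨by simp only [Finset.mem_Ioo]; omega, ?_⟩
    intro x hx
    have hxS := Finset.mem_of_mem_erase hx
    have h2 := hsub hxS
    simp only [Finset.mem_erase] at hx
    simp only [Finset.mem_Ioo] at h2 ⊢
    have := S.le_max' x hxS
    omega
  · rintro ⟨l, S'⟩ hx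
    dsimp only
    simp only [Finset.mem_sigma, Finset.mem_powerset, Finset.mem_Ioo] at hx
    simp only [Finset.mem_filter, Finset.mem_powerset]
    constructor
    · intro x hxmem
      rcases Finset.mem_insert.mp hxmem with rfl | hy
      · simp [Finset.mem_Ioo]; omega
      · have := hx.2 hy; simp only [Finset.mem_Ioo] at this ⊢; omega
    · exact Finset.insert_nonempty _ _
  · intro S hS
    dsimp only
    simp only [Finset.mem_filter, Finset.mem_powerset] at hS
    rw [mxF_eq hS.2]
    exact Finset.insert_erase (S.max'_mem hS.2)
  · rintro ⟨l, S'⟩ hx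
    dsimp only
    simp only [Finset.mem_sigma, Finset.mem_powerset, Finset.mem_Ioo] at hx
    have hfst : mxF (insert l S') = l := by
      apply mxF_insert
      intro x hxm
      have := hx.2 hxm
      simp only [Finset.mem_Ioo] at this
      omega
    have hlS' : l ∉ S' := by
      intro hmem
      have := hx.2 hmem
      simp only [Finset.mem_Ioo] at this
      omega
    simp only [hfst]
    rw [Finset.erase_insert hlS']
  · intro S hS
    dsimp only
    simp only [Finset.mem_filter, Finset.mem_powerset] at hS
    rw [mxF_eq hS.2, Finset.insert_erase (S.max'_mem hS.2)]


/-- the recurrence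
`p_{r,s} = Σ_{l=s}^{r} (p_{r,l}·f_r(l,s)·Y(r,s) + p_{l,s}·f_s(r,l)·Y(s,r))` with prescribed
diagonal values `p_{s,s}` has a unique solution, given by the closed formula summing `seqTerm`
over all strictly decreasing integer sequences from `r` to `s`. -/
theorem recurrence_closed_form (m : ℕ) (t : ℂ) (ht : t ≠ 0) (d : ℕ → ℂ)
    (hd : ∀ i j, 1 ≤ i → i ≤ m → 1 ≤ j → j ≤ m → i ≠ j → d i ≠ d j)
    (doff : ℕ → ℕ → ℂ) (pdiag : ℕ → ℂ) (p : ℕ → ℕ → ℂ)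
    (hpdiag : ∀ s, 1 ≤ s → s ≤ m → p s s = pdiag s)
    (hrec : ∀ r s, 1 ≤ s → s < r → r ≤ m →
      p r s = ∑ l ∈ Finset.Icc s r,
        (p r l * fz t doff r l s * Yc t d r s + p l s * fz t doff s r l * Yc t d s r)) :
    (∀ q : ℕ → ℕ → ℂ,
      (∀ s, 1 ≤ s → s ≤ m → q s s = pdiag s) →
      (∀ r s, 1 ≤ s → s < r → r ≤ m →
        q r s = ∑ l ∈ Finset.Icc s r,
          (q r l * fz t doff r l s * Yc t d r s + q l s * fz t doff s r l * Yc t d s r)) →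
      ∀ r s, 1 ≤ s → s ≤ r → r ≤ m → q r s = p r s) ∧
    (∀ r s, 1 ≤ s → s < r → r ≤ m →
      p r s = ∑ S ∈ (Finset.Ioo s r).powerset, seqTerm t d doff pdiag (seqList r s S)) := by
  constructor
  · -- uniqueness
    intro q hq1 hq2
    have main : ∀ n r s, 1 ≤ s → s ≤ r → r ≤ m → r - s ≤ n → q r s = p r s := by
      intro n
      induction n with
      | zero =>
        intro r s h1 h2 h3 h4
        have hrs : r = s := by omega
        subst hrs
        rw [hq1 r h1 h3, hpdiag r h1 h3]
      | succ n ih =>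
        intro r s h1 h2 h3 h4
        rcases eq_or_lt_of_le h2 with hrs | hlt
        · subst hrs
          rw [hq1 s h1 h3, hpdiag s h1 h3]
        · rw [hq2 r s h1 hlt h3, hrec r s h1 hlt h3]
          refine Finset.sum_congr rfl fun l hl => ?_
          simp only [Finset.mem_Icc] at hl
          rcases eq_or_lt_of_le hl.1 with hsl | hsl
          · have h0 : fz t doff r l s = 0 := by
              rw [← hsl]; exact fz_zero t doff le_rfl
            rw [h0, ih l s h1 (by omega) (by omega) (by omega)]
            simp
          · rcases eq_or_lt_of_le hl.2 with hlr | hlr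
            · have h0 : fz t doff s r l = 0 := by
                rw [hlr]; exact fz_zero t doff le_rfl
              rw [h0, ih r l (by omega) (by omega) h3 (by omega)]
              simp
            · rw [ih r l (by omega) (by omega) h3 (by omega),
                ih l s h1 (by omega) (by omega) (by omega)]
    intro r s h1 h2 h3
    exact main (r - s) r s h1 h2 h3 le_rfl
  · -- closed form
    have closed : ∀ n r s, 1 ≤ s → s < r → r ≤ m → r - s ≤ n →
        p r s = ∑ S ∈ (Finset.Ioo s r).powerset, seqTerm t d doff pdiag (seqList r s S) := by
      intro n
      induction n with
      | zero => intro r s h1 h2 h3 h4; omega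
      | succ n ih =>
        intro r s h1 h2 h3 h4
        rw [hrec r s h1 h2 h3]
        have hIcc : Finset.Icc s r = insert s (insert r (Finset.Ioo s r)) := by
          ext x; simp only [Finset.mem_Icc, Finset.mem_insert, Finset.mem_Ioo]; omega
        rw [hIcc]
        rw [Finset.sum_insert (by simp only [Finset.mem_insert, Finset.mem_Ioo]; omega)]
        rw [Finset.sum_insert (by simp only [Finset.mem_Ioo]; omega)]
        rw [fz_zero t doff (le_refl s)]
        rw [fz_zero t doff (le_refl r)]
        rw [hpdiag s h1 (by omega), hpdiag r (by omega) h3]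
        have hsum1 : ∑ l ∈ Finset.Ioo s r,
            (p r l * fz t doff r l s * Yc t d r s + p l s * fz t doff s r l * Yc t d s r)
            = ∑ l ∈ Finset.Ioo s r,
              ((∑ S' ∈ (Finset.Ioo l r).powerset, seqTerm t d doff pdiag (seqList r l S')) *
                  (fz t doff r l s * Yc t d r s)
                + (∑ S' ∈ (Finset.Ioo s l).powerset, seqTerm t d doff pdiag (seqList l s S')) *
                  (fz t doff s r l * Yc t d s r)) := by
          refine Finset.sum_congr rfl fun l hl => ?_
          simp only [Finset.mem_Ioo] at hl
          rw [ih r l (by omega) (by omega) h3 (by omega),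
            ih l s h1 (by omega) (by omega) (by omega)]
          ring
        rw [hsum1, Finset.sum_add_distrib]
        -- now transform the RHS
        rw [sum_powerset_split s r (fun S => seqTerm t d doff pdiag (seqList r s S))]
        rw [seqList_empty r s h2, seqTerm_pair]
        have hsplit : ∑ S ∈ (Finset.Ioo s r).powerset.filter (fun S => S.Nonempty),
              seqTerm t d doff pdiag (seqList r s S)
            = ∑ S ∈ (Finset.Ioo s r).powerset.filter (fun S => S.Nonempty),
              (seqTerm t d doff pdiag (seqList r (mnF S) (S.erase (mnF S))) *
                  (fz t doff r (mnF S) s * Yc t d r s)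
                + seqTerm t d doff pdiag (seqList (mxF S) s (S.erase (mxF S))) *
                  (fz t doff s r (mxF S) * Yc t d s r)) := by
          refine Finset.sum_congr rfl fun S hS => ?_
          simp only [Finset.mem_filter, Finset.mem_powerset] at hS
          obtain ⟨hsub, hne⟩ := hS
          rw [mnF_eq hne, mxF_eq hne]
          exact star_set m t ht d hd doff pdiag r s S h1 h3 h2 hsub hne
        rw [hsplit, Finset.sum_add_distrib]
        rw [sum_powerset_min s r (fun S => seqTerm t d doff pdiag (seqList r (mnF S) (S.erase (mnF S))) *
              (fz t doff r (mnF S) s * Yc t d r s))]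
        rw [sum_powerset_max s r (fun S => seqTerm t d doff pdiag (seqList (mxF S) s (S.erase (mxF S))) *
              (fz t doff s r (mxF S) * Yc t d s r))]
        have hA : ∑ l ∈ Finset.Ioo s r, ∑ S' ∈ (Finset.Ioo l r).powerset,
              seqTerm t d doff pdiag (seqList r (mnF (insert l S')) ((insert l S').erase (mnF (insert l S')))) *
                (fz t doff r (mnF (insert l S')) s * Yc t d r s)
            = ∑ l ∈ Finset.Ioo s r,
              (∑ S' ∈ (Finset.Ioo l r).powerset, seqTerm t d doff pdiag (seqList r l S')) *
                (fz t doff r l s * Yc t d r s) := by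
          refine Finset.sum_congr rfl fun l hl => ?_
          simp only [Finset.mem_Ioo] at hl
          rw [Finset.sum_mul]
          refine Finset.sum_congr rfl fun S' hS' => ?_
          simp only [Finset.mem_powerset] at hS'
          have hgt : ∀ x ∈ S', l < x := by
            intro x hx; have := hS' hx; simp only [Finset.mem_Ioo] at this; omega
          have hlS' : l ∉ S' := fun h => lt_irrefl l (hgt l h)
          rw [mnF_insert hgt, Finset.erase_insert hlS']
        have hB : ∑ l ∈ Finset.Ioo s r, ∑ S' ∈ (Finset.Ioo s l).powerset,
              seqTerm t d doff pdiag (seqList (mxF (insert l S')) s ((insert l S').erase (mxF (insert l S')))) *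
                (fz t doff s r (mxF (insert l S')) * Yc t d s r)
            = ∑ l ∈ Finset.Ioo s r,
              (∑ S' ∈ (Finset.Ioo s l).powerset, seqTerm t d doff pdiag (seqList l s S')) *
                (fz t doff s r l * Yc t d s r) := by
          refine Finset.sum_congr rfl fun l hl => ?_
          simp only [Finset.mem_Ioo] at hl
          rw [Finset.sum_mul]
          refine Finset.sum_congr rfl fun S' hS' => ?_
          simp only [Finset.mem_powerset] at hS'
          have hltx : ∀ x ∈ S', x < l := by
            intro x hx; have := hS' hx; simp only [Finset.mem_Ioo] at this; omega
          have hlS' : l ∉ S' := fun h => lt_irrefl l (hltx l h)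
          rw [mxF_insert hltx, Finset.erase_insert hlS']
        rw [hA, hB]
        ring
    intro r s h1 h2 h3
    exact closed (r - s) r s h1 h2 h3 le_rfl

end
end
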